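/- Let R be an algebraically closed field, G a finite group (or a group with H of finite index), H a normal subgroup of G with G/H abelian, and π an irreducible R-representation of H. If Π and Π' are irreducible R-representations of G whose restrictions to H both contain π, then Π' ≅ Π ⊗ χ for some character χ: G → R^× that is trivial on H. -/

import Mathlib

open Module

lemma aux_eig {K : Type*} [Field K] [IsAlgClosed K]
    {V : Type*} [AddCommGroup V] [Module K V] [FiniteDimensional K V]
    (s : Finset (End K V))
    (hcomm : ∀ f ∈ s, ∀ g ∈ s, f * g = g * f) :
    ∀ U : Submodule K V, U ≠ ⊥ → (∀ f ∈ s, ∀ u ∈ U, f u ∈ U) →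
      ∃ v ∈ U, v ≠ 0 ∧ ∀ f ∈ s, ∃ c : K, f v = c • v := by
  classical
  induction s using Finset.induction_on with
  | empty =>
    intro U hU _
    obtain ⟨v, hv, hv0⟩ := Submodule.exists_mem_ne_zero_of_ne_bot hU
    exact ⟨v, hv, hv0, by simp⟩
  | @insert f s hf ih =>
    intro U hU hinv
    have hfU : ∀ u ∈ U, f u ∈ U := hinv f (Finset.mem_insert_self f s)
    have hUnt : Nontrivial U := Submodule.nontrivial_iff_ne_bot.mpr hU
    obtain ⟨c, hc⟩ := End.exists_eigenvalue (LinearMap.restrict f hfU)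
    obtain ⟨u, hu⟩ := hc.exists_hasEigenvector
    set U' : Submodule K V := U ⊓ LinearMap.ker (f - c • (1 : End K V)) with hU'
    have hkermem : ∀ x : V, f x = c • x → x ∈ LinearMap.ker (f - c • (1 : End K V)) := by
      intro x hx
      rw [LinearMap.mem_ker, LinearMap.sub_apply, LinearMap.smul_apply, Module.End.one_apply,
        hx, sub_self]
    have hkermem' : ∀ x : V, x ∈ LinearMap.ker (f - c • (1 : End K V)) → f x = c • x := by
      intro x hx
      rw [LinearMap.mem_ker, LinearMap.sub_apply, LinearMap.smul_apply, Module.End.one_apply,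
        sub_eq_zero] at hx
      exact hx
    have huU' : (u : V) ∈ U' := by
      refine Submodule.mem_inf.mpr ⟨u.2, hkermem _ ?_⟩
      have h2 := hu.apply_eq_smul
      calc f (u : V) = ((LinearMap.restrict f hfU) u : V) := by
            rw [LinearMap.restrict_coe_apply]
        _ = c • (u : V) := by rw [h2]; rfl
    have hU'ne : U' ≠ ⊥ := by
      intro h
      apply hu.2
      have : (u : V) = 0 := by rw [h] at huU'; simpa using huU'
      exact Subtype.ext this
    have hinv' : ∀ g ∈ s, ∀ u ∈ U', g u ∈ U' := by
      intro g hg x hx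
      obtain ⟨hxU, hxker⟩ := Submodule.mem_inf.mp hx
      refine Submodule.mem_inf.mpr ⟨hinv g (Finset.mem_insert_of_mem hg) x hxU, hkermem _ ?_⟩
      have hcom := hcomm f (Finset.mem_insert_self f s) g (Finset.mem_insert_of_mem hg)
      have hx2 : f x = c • x := hkermem' _ hxker
      have h1 : f (g x) = g (f x) := by
        have := congrArg (fun T : End K V => T x) hcom
        simpa [Module.End.mul_apply] using this
      rw [h1, hx2, map_smul]
    obtain ⟨v, hvU', hv0, heig⟩ := ih
      (fun a ha b hb => hcomm a (Finset.mem_insert_of_mem ha) b (Finset.mem_insert_of_mem hb))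
      U' hU'ne hinv'
    obtain ⟨hvU, hvker⟩ := Submodule.mem_inf.mp hvU'
    refine ⟨v, hvU, hv0, ?_⟩
    intro g hg
    rcases Finset.mem_insert.mp hg with rfl | hg
    · exact ⟨c, hkermem' _ hvker⟩
    · exact heig g hg

open Representation

section Corr
variable {R : Type*} [CommSemiring R] {H : Type*} [Monoid H]
  {V : Type*} [AddCommMonoid V] [Module R V] (ρ : Representation R H V)

lemma aux_asAlgebraHom_mem (U : Submodule R V) (hU : ∀ (h : H), ∀ v ∈ U, ρ h v ∈ U)
    (a : MonoidAlgebra R H) {v : V} (hv : v ∈ U) : ρ.asAlgebraHom a v ∈ U := by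
  induction a using MonoidAlgebra.induction with
  | zero => simp
  | single_add g r a hg hr ih =>
    rw [map_add, LinearMap.add_apply]
    refine U.add_mem ?_ ih
    rw [Representation.asAlgebraHom_single]
    exact U.smul_mem r (hU g v hv)

/-- The `MonoidAlgebra`-submodule corresponding to an invariant submodule. -/
def auxToA (U : Submodule R V) (hU : ∀ (h : H), ∀ v ∈ U, ρ h v ∈ U) :
    Submodule (MonoidAlgebra R H) ρ.asModule where
  carrier := {x | ρ.asModuleEquiv x ∈ U}
  add_mem' {x y} hx hy := by
    simp only [Set.mem_setOf_eq, map_add] at *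
    exact U.add_mem hx hy
  zero_mem' := by simp
  smul_mem' a x hx := by
    simp only [Set.mem_setOf_eq] at *
    rw [Representation.asModuleEquiv_map_smul]
    exact aux_asAlgebraHom_mem ρ U hU a hx

lemma aux_mem_toA {U : Submodule R V} {hU : ∀ (h : H), ∀ v ∈ U, ρ h v ∈ U}
    {x : ρ.asModule} : x ∈ auxToA ρ U hU ↔ ρ.asModuleEquiv x ∈ U := Iff.rfl

/-- The invariant submodule corresponding to a `MonoidAlgebra`-submodule. -/
def auxOfA (UA : Submodule (MonoidAlgebra R H) ρ.asModule) : Submodule R V where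
  carrier := {v | ρ.asModuleEquiv.symm v ∈ UA}
  add_mem' {x y} hx hy := by
    simp only [Set.mem_setOf_eq, map_add] at *
    exact UA.add_mem hx hy
  zero_mem' := by simp
  smul_mem' r v hv := by
    simp only [Set.mem_setOf_eq] at *
    rw [Representation.asModuleEquiv_symm_map_smul]
    exact UA.smul_mem _ hv

lemma aux_mem_ofA {UA : Submodule (MonoidAlgebra R H) ρ.asModule} {v : V} :
    v ∈ auxOfA ρ UA ↔ ρ.asModuleEquiv.symm v ∈ UA := Iff.rfl

lemma aux_ofA_inv (UA : Submodule (MonoidAlgebra R H) ρ.asModule) :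
    ∀ (h : H), ∀ v ∈ auxOfA ρ UA, ρ h v ∈ auxOfA ρ UA := by
  intro h v hv
  rw [aux_mem_ofA, Representation.asModuleEquiv_symm_map_rho]
  exact UA.smul_mem _ hv

lemma aux_ofA_toA (U : Submodule R V) (hU : ∀ (h : H), ∀ v ∈ U, ρ h v ∈ U) :
    auxOfA ρ (auxToA ρ U hU) = U := by
  ext v
  rw [aux_mem_ofA, aux_mem_toA]
  simp

lemma aux_ofA_le {UA UA' : Submodule (MonoidAlgebra R H) ρ.asModule} (h : UA ≤ UA') :
    auxOfA ρ UA ≤ auxOfA ρ UA' := fun v hv => h hv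

lemma aux_ofA_eq_top {UA : Submodule (MonoidAlgebra R H) ρ.asModule}
    (h : auxOfA ρ UA = ⊤) : UA = ⊤ := by
  rw [eq_top_iff]
  intro x _
  have : ρ.asModuleEquiv x ∈ auxOfA ρ UA := h ▸ Submodule.mem_top
  rw [aux_mem_ofA] at this
  simpa using this

lemma aux_ofA_eq_bot {UA : Submodule (MonoidAlgebra R H) ρ.asModule}
    (h : auxOfA ρ UA = ⊥) : UA = ⊥ := by
  rw [eq_bot_iff]
  intro x hx
  have : ρ.asModuleEquiv x ∈ auxOfA ρ UA := by rw [aux_mem_ofA]; simpa using hx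
  rw [h, Submodule.mem_bot] at this
  simpa using (map_eq_zero_iff _ ρ.asModuleEquiv.injective).mp this

lemma aux_toA_ne_bot {U : Submodule R V} {hU : ∀ (h : H), ∀ v ∈ U, ρ h v ∈ U}
    (h : U ≠ ⊥) : auxToA ρ U hU ≠ ⊥ := by
  intro hb
  exact h (by rw [← aux_ofA_toA ρ U hU, hb]; ext v; simp [aux_mem_ofA])

lemma aux_toA_ofA (UA : Submodule (MonoidAlgebra R H) ρ.asModule) :
    auxToA ρ (auxOfA ρ UA) (aux_ofA_inv ρ UA) = UA := by
  ext x
  rw [aux_mem_toA, aux_mem_ofA]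
  simp

end Corr

section PartA
variable {R : Type*} [Field R]
  {G : Type*} [Group G] (H : Subgroup G) [H.Normal]
  {V V' W : Type*} [AddCommGroup V] [Module R V] [AddCommGroup V'] [Module R V']
  [AddCommGroup W] [Module R W]
  (P : Representation R G V) (P' : Representation R G V') (π : Representation R H W)

lemma aux_partA
    (hπne : ∃ w : W, w ≠ 0)
    (hπirr : ∀ U : Submodule R W, (∀ h : H, ∀ w ∈ U, π h w ∈ U) → U = ⊥ ∨ U = ⊤)
    (hPirr : ∀ U : Submodule R V, (∀ g : G, ∀ v ∈ U, P g v ∈ U) → U = ⊥ ∨ U = ⊤)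
    (f : W →ₗ[R] V) (hfinj : Function.Injective f)
    (hfeq : ∀ (h : H) (w : W), f (π h w) = P (h : G) (f w))
    (f' : W →ₗ[R] V') (hf'inj : Function.Injective f')
    (hf'eq : ∀ (h : H) (w : W), f' (π h w) = P' (h : G) (f' w)) :
    ∃ T : V →ₗ[R] V', T ≠ 0 ∧ ∀ (h : H) (v : V), T (P (h : G) v) = P' (h : G) (T v) := by
  classical
  obtain ⟨w₀, hw₀⟩ := hπne
  set ρ : Representation R H V := P.comp H.subtype with hρ
  have hρ_apply : ∀ (h : H) (v : V), ρ h v = P (h : G) v := fun h v => rfl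
  -- the conjugate copies of `W` inside `V`
  set Wg : G → Submodule R V := fun g => LinearMap.range (P g ∘ₗ f) with hWg
  have hPinj : ∀ g : G, Function.Injective (P g) := by
    intro g x y hxy
    have := congrArg (P g⁻¹) hxy
    simpa [← Module.End.mul_apply, ← map_mul] using this
  have hWginv : ∀ g : G, ∀ (h : H), ∀ v ∈ Wg g, ρ h v ∈ Wg g := by
    intro g h v hv
    obtain ⟨w, rfl⟩ := hv
    refine ⟨π ⟨g⁻¹ * h * g, by
      have := Subgroup.Normal.conj_mem ‹H.Normal› (h : G) h.2 g⁻¹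
      simpa using this⟩ w, ?_⟩
    simp only [LinearMap.comp_apply]
    rw [hfeq]
    simp only [hρ_apply, ← Module.End.mul_apply, ← map_mul]
    congr 2
    group
  -- each `Wg g` is simple as an invariant submodule
  have hWgsimple : ∀ g : G, ∀ U : Submodule R V,
      (∀ (h : H), ∀ v ∈ U, ρ h v ∈ U) → U ≤ Wg g → U = ⊥ ∨ U = Wg g := by
    intro g U hUinv hUle
    have hginj : Function.Injective (P g ∘ₗ f) := (hPinj g).comp hfinj
    set U' : Submodule R W := Submodule.comap (P g ∘ₗ f) U with hU'
    have hU'inv : ∀ h : H, ∀ w ∈ U', π h w ∈ U' := by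
      intro h w hw
      simp only [hU', Submodule.mem_comap, LinearMap.comp_apply] at hw ⊢
      rw [hfeq]
      have key : P g (P (h : G) (f w)) = P ((g * h * g⁻¹ : G)) (P g (f w)) := by
        simp only [← Module.End.mul_apply, ← map_mul]
        congr 1
        group
      rw [key]
      exact hUinv ⟨g * h * g⁻¹, Subgroup.Normal.conj_mem ‹H.Normal› (h : G) h.2 g⟩ _ hw
    rcases hπirr U' hU'inv with hbot | htop
    · left
      rw [eq_bot_iff]
      intro v hv
      obtain ⟨w, rfl⟩ := hUle hv
      have : w ∈ U' := hv
      rw [hbot, Submodule.mem_bot] at this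
      simp [this]
    · right
      refine le_antisymm hUle ?_
      rintro v ⟨w, rfl⟩
      have : w ∈ U' := htop ▸ Submodule.mem_top
      exact this
  -- the sum of the `Wg g` is everything
  have hsupinv : ∀ g : G, ∀ v ∈ (⨆ g' : G, Wg g'), P g v ∈ (⨆ g' : G, Wg g') := by
    intro g v hv
    have : P g v ∈ Submodule.map (P g) (⨆ g' : G, Wg g') := ⟨v, hv, rfl⟩
    rw [Submodule.map_iSup] at this
    refine (iSup_le fun g' => ?_ : (⨆ g', Submodule.map (P g) (Wg g')) ≤ ⨆ g', Wg g') this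
    have : Submodule.map (P g) (Wg g') = Wg (g * g') := by
      rw [hWg]
      simp only
      rw [← LinearMap.range_comp, ← LinearMap.comp_assoc, ← Module.End.mul_eq_comp, ← map_mul]
    rw [this]
    exact le_iSup _ (g * g')
  have hsup : (⨆ g : G, Wg g) = ⊤ := by
    rcases hPirr (⨆ g : G, Wg g) hsupinv with hbot | htop
    · exfalso
      have hmem : f w₀ ∈ ⨆ g : G, Wg g := by
        refine Submodule.mem_iSup_of_mem 1 ⟨w₀, ?_⟩
        simp
      rw [hbot, Submodule.mem_bot] at hmem
      exact hw₀ (hfinj (by simpa using hmem))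
    · exact htop
  -- pass to `MonoidAlgebra R H`-modules
  set A := MonoidAlgebra R (↥H) with hA
  have hWgne : ∀ g : G, Wg g ≠ ⊥ := by
    intro g hb
    have hm : (P g ∘ₗ f) w₀ ∈ Wg g := LinearMap.mem_range_self _ w₀
    rw [hb, Submodule.mem_bot] at hm
    apply hw₀
    apply (hPinj g).comp hfinj
    simpa using hm
  have hsimpleA : ∀ g : G, IsSimpleModule A (↥(auxToA ρ (Wg g) (hWginv g))) := by
    intro g
    rw [isSimpleModule_iff_isAtom]
    constructor
    · exact aux_toA_ne_bot ρ (hWgne g)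
    · intro b hb
      have hble : auxOfA ρ b ≤ Wg g := by
        have := aux_ofA_le ρ hb.le
        rwa [aux_ofA_toA] at this
      rcases hWgsimple g (auxOfA ρ b) (aux_ofA_inv ρ b) hble with h0 | heq
      · exact aux_ofA_eq_bot ρ h0
      · exfalso
        refine hb.ne ?_
        conv_lhs => rw [← aux_toA_ofA ρ b]
        ext x
        rw [aux_mem_toA, aux_mem_toA, heq]
  have hZ : sSup (Set.range fun g : G => auxToA ρ (Wg g) (hWginv g)) = ⊤ := by
    apply aux_ofA_eq_top ρ
    rw [eq_top_iff, ← hsup]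
    refine iSup_le fun g => ?_
    have h1 : auxToA ρ (Wg g) (hWginv g) ≤
        sSup (Set.range fun g : G => auxToA ρ (Wg g) (hWginv g)) :=
      le_sSup (Set.mem_range_self g)
    have h2 := aux_ofA_le ρ h1
    rwa [aux_ofA_toA] at h2
  haveI hss : IsSemisimpleModule A ρ.asModule := by
    apply IsSemisimpleModule.of_sSup_simples_eq_top
    refine le_antisymm le_top ?_
    rw [← hZ]
    refine sSup_le_sSup ?_
    rintro x ⟨g, rfl⟩
    exact hsimpleA g
  have hrfinv : ∀ (h : ↥H), ∀ v ∈ LinearMap.range f, ρ h v ∈ LinearMap.range f := by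
    rintro h v ⟨w, rfl⟩
    exact ⟨π h w, hfeq h w⟩
  set Nf : Submodule A ρ.asModule := auxToA ρ (LinearMap.range f) hrfinv with hNf
  obtain ⟨C, hC⟩ := exists_isCompl Nf
  set pr := Submodule.linearProjOfIsCompl Nf C hC with hpr
  set e₁ : W ≃ₗ[R] LinearMap.range f := LinearEquiv.ofInjective f hfinj with he₁
  have hsymm : ∀ (z : W) (hz : f z ∈ LinearMap.range f), e₁.symm ⟨f z, hz⟩ = z := by
    intro z hz
    apply hfinj
    rw [he₁, LinearEquiv.ofInjective_symm_apply]
  set u : V → ↥(LinearMap.range f) := fun v =>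
    ⟨ρ.asModuleEquiv ((pr (ρ.asModuleEquiv.symm v) : ρ.asModule)),
      (pr (ρ.asModuleEquiv.symm v)).2⟩ with hu
  have hu_val : ∀ v : V,
      (u v : V) = ρ.asModuleEquiv ((pr (ρ.asModuleEquiv.symm v) : ρ.asModule)) :=
    fun v => rfl
  have hE_alg : ∀ (r : R) (m : ρ.asModule),
      ρ.asModuleEquiv ((algebraMap R A r) • m) = r • ρ.asModuleEquiv m := by
    intro r m
    rw [Representation.asModuleEquiv_map_smul]
    rw [AlgHom.commutes]
    simp
  have hE_of : ∀ (h : ↥H) (m : ρ.asModule),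
      ρ.asModuleEquiv ((MonoidAlgebra.of R (↥H) h) • m) = ρ h (ρ.asModuleEquiv m) := by
    intro h m
    rw [Representation.asModuleEquiv_map_smul, Representation.asAlgebraHom_of]
  have hu_add : ∀ v w : V, u (v + w) = u v + u w := by
    intro v w
    apply Subtype.ext
    rw [Submodule.coe_add, hu_val, hu_val, hu_val, map_add, map_add, Submodule.coe_add, map_add]
  have hu_smul : ∀ (r : R) (v : V), u (r • v) = r • u v := by
    intro r v
    apply Subtype.ext
    rw [SetLike.val_smul, hu_val, hu_val, Representation.asModuleEquiv_symm_map_smul,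
      map_smul, Submodule.coe_smul, hE_alg]
  have hu_rho : ∀ (h : ↥H) (v : V), (u (P (h : G) v) : V) = P (h : G) ((u v : V)) := by
    intro h v
    rw [hu_val, hu_val, ← hρ_apply h v, Representation.asModuleEquiv_symm_map_rho,
      map_smul, Submodule.coe_smul, hE_of, hρ_apply]
  set T : V →ₗ[R] V' :=
    { toFun := fun v => f' (e₁.symm (u v))
      map_add' := by
        intro v w
        show f' (e₁.symm (u (v + w))) = f' (e₁.symm (u v)) + f' (e₁.symm (u w))
        rw [hu_add, map_add, map_add]
      map_smul' := by
        intro r v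
        show f' (e₁.symm (u (r • v))) = (RingHom.id R) r • f' (e₁.symm (u v))
        rw [hu_smul, map_smul, map_smul]
        rfl } with hT
  have hNfmem : ∀ w : W, (ρ.asModuleEquiv.symm (f w) : ρ.asModule) ∈ Nf := by
    intro w
    rw [hNf, aux_mem_toA]
    simp
  have hTval : ∀ w : W, T (f w) = f' w := by
    intro w
    show f' (e₁.symm (u (f w))) = f' w
    have hproj : pr (ρ.asModuleEquiv.symm (f w)) = ⟨ρ.asModuleEquiv.symm (f w), hNfmem w⟩ :=
      Submodule.linearProjOfIsCompl_apply_left hC ⟨_, hNfmem w⟩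
    have hufw : u (f w) = ⟨f w, LinearMap.mem_range_self f w⟩ := by
      apply Subtype.ext
      rw [hu_val, hproj]
      simp
    rw [hufw, hsymm]
  have hTne : T ≠ 0 := by
    intro h0
    apply hw₀
    apply hf'inj
    rw [← hTval w₀, h0]
    simp
  refine ⟨T, hTne, ?_⟩
  intro h v
  show f' (e₁.symm (u (P (h : G) v))) = P' (h : G) (f' (e₁.symm (u v)))
  obtain ⟨w, hw⟩ := (u v).2
  have h1 : u v = ⟨f w, LinearMap.mem_range_self f w⟩ := Subtype.ext hw.symm
  have h2 : u (P (h : G) v) = ⟨f (π h w), LinearMap.mem_range_self f (π h w)⟩ := by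
    apply Subtype.ext
    rw [hu_rho, ← hw, ← hfeq]
  rw [h1, h2, hsymm, hsymm, hf'eq]

end PartA

/-- Let `R` be algebraically closed, `H` a normal subgroup of finite index of `G` with
`G/H` abelian, and `π` an irreducible `R`-representation of `H`. If `P` and `P'` are
irreducible `R`-representations of `G` whose restrictions to `H` both contain `π`, then
`P' ≅ P ⊗ χ` for some character `χ : G → Rˣ` trivial on `H`. -/
theorem twist_by_character_of_common_constituent
    {R : Type*} [Field R] [IsAlgClosed R]
    {G : Type*} [Group G] (H : Subgroup G) [H.Normal]
    (hfin : H.index ≠ 0)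
    (hab : ∀ g g' : G, g * g' * g⁻¹ * g'⁻¹ ∈ H)
    {V V' W : Type*} [AddCommGroup V] [Module R V] [AddCommGroup V'] [Module R V']
    [AddCommGroup W] [Module R W]
    (P : Representation R G V) (P' : Representation R G V') (π : Representation R H W)
    (hπne : ∃ w : W, w ≠ 0)
    (hπirr : ∀ U : Submodule R W, (∀ h : H, ∀ w ∈ U, π h w ∈ U) → U = ⊥ ∨ U = ⊤)
    (hPne : ∃ v : V, v ≠ 0)
    (hPirr : ∀ U : Submodule R V, (∀ g : G, ∀ v ∈ U, P g v ∈ U) → U = ⊥ ∨ U = ⊤)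
    (hP'ne : ∃ v : V', v ≠ 0)
    (hP'irr : ∀ U : Submodule R V', (∀ g : G, ∀ v ∈ U, P' g v ∈ U) → U = ⊥ ∨ U = ⊤)
    (hc : ∃ f : W →ₗ[R] V, Function.Injective f ∧
      ∀ (h : H) (w : W), f (π h w) = P (h : G) (f w))
    (hc' : ∃ f : W →ₗ[R] V', Function.Injective f ∧
      ∀ (h : H) (w : W), f (π h w) = P' (h : G) (f w)) :
    ∃ χ : G →* Rˣ, (∀ h ∈ H, χ h = 1) ∧
      ∃ e : V ≃ₗ[R] V', ∀ (g : G) (v : V), e ((χ g : R) • P g v) = P' g (e v) := by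
  classical
  obtain ⟨f, hfinj, hfeq⟩ := hc
  obtain ⟨f', hf'inj, hf'eq⟩ := hc'
  obtain ⟨φ, hφne, hφeq⟩ := aux_partA H P P' π hπne hπirr hPirr f hfinj hfeq f' hf'inj hf'eq
  -- the space of `H`-equivariant maps
  set X : Submodule R (V →ₗ[R] V') :=
    { carrier := {T | ∀ h : G, h ∈ H → ∀ v : V, T (P h v) = P' h (T v)}
      add_mem' := by
        intro a b ha hb h hh v
        simp only [LinearMap.add_apply, ha h hh v, hb h hh v, map_add]
      zero_mem' := by simp
      smul_mem' := by
        intro r a ha h hh v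
        simp only [LinearMap.smul_apply, ha h hh v, map_smul] } with hX
  have hφX : φ ∈ X := fun h hh v => hφeq ⟨h, hh⟩ v
  -- the twisting action on maps
  set conj : G → (V →ₗ[R] V') →ₗ[R] (V →ₗ[R] V') := fun g =>
    { toFun := fun T => P' g ∘ₗ T ∘ₗ P g⁻¹
      map_add' := by intro T S; ext v; simp
      map_smul' := by intro r T; ext v; simp } with hconj
  have conj_apply : ∀ (g : G) (T : V →ₗ[R] V') (v : V),
      conj g T v = P' g (T (P g⁻¹ v)) := fun _ _ _ => rfl
  have conj_mul : ∀ (a b : G) (T : V →ₗ[R] V'), conj (a * b) T = conj a (conj b T) := by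
    intro a b T
    ext v
    simp only [conj_apply, mul_inv_rev, map_mul, Module.End.mul_apply]
  have conj_one : ∀ T : V →ₗ[R] V', conj 1 T = T := by
    intro T
    ext v
    simp [conj_apply]
  have conj_memX : ∀ (g : G), ∀ T ∈ X, conj g T ∈ X := by
    intro g T hT h hh v
    rw [conj_apply, conj_apply]
    have h1 : P g⁻¹ (P h v) = P (g⁻¹ * h * g) (P g⁻¹ v) := by
      simp only [← Module.End.mul_apply, ← map_mul]
      congr 2
      group
    have hmem : g⁻¹ * h * g ∈ H := by
      have := Subgroup.Normal.conj_mem ‹H.Normal› h hh g⁻¹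
      simpa [mul_assoc] using this
    rw [h1, hT (g⁻¹ * h * g) hmem]
    simp only [← Module.End.mul_apply, ← map_mul]
    congr 2
    group
  have conj_H : ∀ k : G, k ∈ H → ∀ T ∈ X, conj k T = T := by
    intro k hk T hT
    ext v
    calc conj k T v = P' k (T (P k⁻¹ v)) := rfl
      _ = T (P k (P k⁻¹ v)) := (hT k hk _).symm
      _ = T v := by
          simp only [← Module.End.mul_apply, ← map_mul, mul_inv_cancel, map_one,
            Module.End.one_apply]
  have conj_coset : ∀ (g k : G), k ∈ H → ∀ T ∈ X, conj (g * k) T = conj g T := by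
    intro g k hk T hT
    rw [conj_mul, conj_H k hk T hT]
  have conj_out : ∀ (g : G), ∀ T ∈ X,
      conj (Quotient.out (QuotientGroup.mk g : G ⧸ H)) T = conj g T := by
    intro g T hT
    obtain ⟨k, hk⟩ := QuotientGroup.mk_out_eq_mul H g
    rw [hk, conj_coset g k k.2 T hT]
  haveI hGH : Finite (G ⧸ H) := Nat.finite_of_card_ne_zero hfin
  -- the orbit of φ and its span
  set O : Set (V →ₗ[R] V') := Set.range (fun q : G ⧸ H => conj q.out φ) with hO
  have hOfin : O.Finite := Set.finite_range _
  have hOX : O ⊆ (X : Set (V →ₗ[R] V')) := by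
    rintro _ ⟨q, rfl⟩
    have : conj q.out φ ∈ X := conj_memX q.out φ hφX
    exact this
  have hOconj : ∀ g : G, conj g φ ∈ O := by
    intro g
    exact ⟨QuotientGroup.mk g, conj_out g φ hφX⟩
  set Y : Submodule R (V →ₗ[R] V') := Submodule.span R O with hY
  haveI hYfd : FiniteDimensional R Y := FiniteDimensional.span_of_finite R hOfin
  have hφY : φ ∈ Y := by
    have : conj 1 φ ∈ Submodule.span R O := Submodule.subset_span (hOconj 1)
    rwa [conj_one] at this
  have hYX : Y ≤ X := Submodule.span_le.mpr hOX
  haveI : Nontrivial Y := by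
    refine Submodule.nontrivial_iff_ne_bot.mpr fun hb => hφne ?_
    rw [hb] at hφY
    simpa using hφY
  have hYinv : ∀ g : G, ∀ T ∈ Y, conj g T ∈ Y := by
    intro g T hT
    have hle : Submodule.map (conj g) Y ≤ Y := by
      rw [hY, Submodule.map_span, Submodule.span_le]
      rintro _ ⟨_, ⟨q, rfl⟩, rfl⟩
      refine Submodule.subset_span ?_
      rw [← conj_mul]
      exact hOconj (g * q.out)
    exact hle ⟨T, hT, rfl⟩
  set EY : G → Module.End R Y := fun g => (conj g).restrict (hYinv g) with hEY
  have hEYcoe : ∀ (g : G) (T : Y), ((EY g T : Y) : V →ₗ[R] V') = conj g (T : V →ₗ[R] V') :=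
    fun g T => rfl
  have hEYout : ∀ g : G, EY (Quotient.out (QuotientGroup.mk g : G ⧸ H)) = EY g := by
    intro g
    ext T v
    have := conj_out g (T : V →ₗ[R] V') (hYX T.2)
    calc ((EY (Quotient.out (QuotientGroup.mk g : G ⧸ H)) T : Y) : V →ₗ[R] V') v
        = conj (Quotient.out (QuotientGroup.mk g : G ⧸ H)) (T : V →ₗ[R] V') v := rfl
      _ = conj g (T : V →ₗ[R] V') v := by rw [this]
  have conj_comm' : ∀ (a b : G), ∀ T ∈ X, conj a (conj b T) = conj b (conj a T) := by
    intro a b T hT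
    have hk : a⁻¹ * b⁻¹ * a * b ∈ H := by
      have := hab a⁻¹ b⁻¹
      simpa using this
    have h1 : a * b = (b * a) * (a⁻¹ * b⁻¹ * a * b) := by group
    rw [← conj_mul, ← conj_mul, h1, conj_coset (b * a) _ hk T hT]
  have hEYcomm : ∀ a b : G, EY a * EY b = EY b * EY a := by
    intro a b
    ext T v
    have hT : (T : V →ₗ[R] V') ∈ X := hYX T.2
    calc (((EY a * EY b) T : Y) : V →ₗ[R] V') v
        = conj a (conj b (T : V →ₗ[R] V')) v := rfl
      _ = conj b (conj a (T : V →ₗ[R] V')) v := by rw [conj_comm' a b _ hT]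
      _ = (((EY b * EY a) T : Y) : V →ₗ[R] V') v := rfl
  -- find a common eigenvector
  set S : Finset (Module.End R Y) := (Set.finite_range fun q : G ⧸ H => EY q.out).toFinset
    with hS
  have hSmem : ∀ g : G, EY g ∈ S := by
    intro g
    rw [hS, Set.Finite.mem_toFinset]
    exact ⟨QuotientGroup.mk g, hEYout g⟩
  have hScomm : ∀ a ∈ S, ∀ b ∈ S, a * b = b * a := by
    intro a ha b hb
    rw [hS, Set.Finite.mem_toFinset] at ha hb
    obtain ⟨qa, rfl⟩ := ha
    obtain ⟨qb, rfl⟩ := hb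
    exact hEYcomm _ _
  obtain ⟨y, -, hy0, heig⟩ := aux_eig S hScomm ⊤ (by
      intro hbot
      have h2 : (⟨φ, hφY⟩ : Y) ∈ (⊥ : Submodule R Y) := hbot ▸ Submodule.mem_top
      rw [Submodule.mem_bot] at h2
      exact hφne (by simpa [Subtype.ext_iff] using h2))
    (fun _ _ u _ => Submodule.mem_top)
  set T₀ : V →ₗ[R] V' := (y : V →ₗ[R] V') with hT₀
  have hT₀X : T₀ ∈ X := hYX y.2
  have hT₀ne : T₀ ≠ 0 := by
    intro h0
    exact hy0 (Subtype.ext h0)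
  have heig' : ∀ g : G, ∃ c : R, conj g T₀ = c • T₀ := by
    intro g
    obtain ⟨c, hcy⟩ := heig (EY g) (hSmem g)
    refine ⟨c, ?_⟩
    calc conj g T₀ = ((EY g y : Y) : V →ₗ[R] V') := rfl
      _ = ((c • y : Y) : V →ₗ[R] V') := by rw [hcy]
      _ = c • T₀ := rfl
  set c : G → R := fun g => (heig' g).choose with hcdef
  have hcspec : ∀ g : G, conj g T₀ = c g • T₀ := fun g => (heig' g).choose_spec
  have uniq : ∀ {a b : R}, a • T₀ = b • T₀ → a = b := by
    intro a b hab'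
    have : (a - b) • T₀ = 0 := by rw [sub_smul, hab', sub_self]
    rcases smul_eq_zero.mp this with h | h
    · exact sub_eq_zero.mp h
    · exact absurd h hT₀ne
  have hc1 : c 1 = 1 := uniq (by rw [← hcspec 1, conj_one, one_smul])
  have hcmul : ∀ a b : G, c (a * b) = c a * c b := by
    intro a b
    apply uniq
    calc c (a * b) • T₀ = conj (a * b) T₀ := (hcspec _).symm
      _ = conj a (conj b T₀) := conj_mul a b T₀
      _ = conj a (c b • T₀) := by rw [hcspec]
      _ = c b • conj a T₀ := map_smul _ _ _
      _ = c b • (c a • T₀) := by rw [hcspec]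
      _ = (c a * c b) • T₀ := by rw [smul_smul, mul_comm]
  have hcH : ∀ k : G, k ∈ H → c k = 1 := fun k hk =>
    uniq (by rw [← hcspec k, conj_H k hk T₀ hT₀X, one_smul])
  have hcinv : ∀ g : G, c g * c g⁻¹ = 1 := by
    intro g
    rw [← hcmul, mul_inv_cancel, hc1]
  have hcinv' : ∀ g : G, c g⁻¹ * c g = 1 := by
    intro g
    rw [← hcmul, inv_mul_cancel, hc1]
  set χ : G →* Rˣ :=
    { toFun := fun g => ⟨c g, c g⁻¹, hcinv g, hcinv' g⟩
      map_one' := Units.ext (by simpa using hc1)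
      map_mul' := fun a b => Units.ext (by simpa using hcmul a b) } with hχ
  have key : ∀ (g : G) (v : V), P' g (T₀ v) = c g • T₀ (P g v) := by
    intro g v
    have h1 := congrArg (fun T : V →ₗ[R] V' => T (P g v)) (hcspec g)
    simp only [LinearMap.smul_apply] at h1
    rw [conj_apply] at h1
    have h2 : P g⁻¹ (P g v) = v := by
      rw [← Module.End.mul_apply, ← map_mul, inv_mul_cancel, map_one, Module.End.one_apply]
    rw [h2] at h1
    exact h1
  have hcne : ∀ g : G, c g ≠ 0 := fun g => left_ne_zero_of_mul_eq_one (hcinv g)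
  have hkerinv : ∀ g : G, ∀ v ∈ LinearMap.ker T₀, P g v ∈ LinearMap.ker T₀ := by
    intro g v hv
    rw [LinearMap.mem_ker] at hv ⊢
    have h3 := key g v
    rw [hv, map_zero] at h3
    rcases smul_eq_zero.mp h3.symm with h | h
    · exact absurd h (hcne g)
    · exact h
  have hker : LinearMap.ker T₀ = ⊥ := by
    rcases hPirr (LinearMap.ker T₀) hkerinv with h | h
    · exact h
    · exact absurd (LinearMap.ker_eq_top.mp h) hT₀ne
  have hrangeinv : ∀ g : G, ∀ v ∈ LinearMap.range T₀, P' g v ∈ LinearMap.range T₀ := by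
    rintro g _ ⟨v, rfl⟩
    rw [key g v]
    exact Submodule.smul_mem _ _ (LinearMap.mem_range_self T₀ _)
  have hrange : LinearMap.range T₀ = ⊤ := by
    rcases hP'irr (LinearMap.range T₀) hrangeinv with h | h
    · exact absurd (LinearMap.range_eq_bot.mp h) hT₀ne
    · exact h
  set e : V ≃ₗ[R] V' :=
    LinearEquiv.ofBijective T₀ ⟨LinearMap.ker_eq_bot.mp hker, LinearMap.range_eq_top.mp hrange⟩
    with he
  refine ⟨χ, fun h hh => ?_, e, ?_⟩
  · rw [Units.ext_iff, Units.val_one]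
    exact hcH h hh
  intro g v
  show T₀ ((c g : R) • P g v) = P' g (T₀ v)
  rw [map_smul, key g v]
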